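/- arXiv:2209.02979 — 2 statements merged into one kernel-verified Lean document; each statement's English description precedes it below -/
import Mathlib

section
/- In a graded 2D open-closed TQFT (relations (1)-(5)), the additional relations hold: (a) (ζ⊗1)c_C = (-1)^{|λ_C|+|λ_A|}(1⊗ζ*)c_A, and (b) μ_C(ζ*⊗1) = ζ* μ_A (1⊗ζ), i.e. the cozipper intertwines the right C-module structures, where A is a C-module via the algebra map ζ. -/
open TensorProduct LinearMap
open scoped TensorProduct DirectSum

namespace GradedCoFrob

variable {R : Type} [CommRing R] {M : Type} [AddCommGroup M] [Module R M]

/-- The Koszul sign `(-1)^n` for `n : ℤ`. -/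
def ksign (n : ℤ) : ℤ := (((-1 : ℤˣ) ^ n : ℤˣ) : ℤ)

variable (𝒜 : ℤ → Submodule R M) [DirectSum.Decomposition 𝒜]

/-- Build a linear map `M →ₗ N` out of its values on the homogeneous pieces,
bundled linearly in the family of values. -/
noncomputable def fromPiecesHom {N : Type} [AddCommGroup N] [Module R N] :
    (∀ i : ℤ, 𝒜 i →ₗ[R] N) →ₗ[R] (M →ₗ[R] N) :=
  (LinearMap.lcomp R N (DirectSum.decomposeLinearEquiv 𝒜).toLinearMap).comp
    (DFinsupp.lsum R (M := fun i => 𝒜 i) (N := N)).toLinearMap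

/-- Build a linear map `M →ₗ N` out of its values on the homogeneous pieces. -/
noncomputable def fromPieces {N : Type} [AddCommGroup N] [Module R N]
    (f : ∀ i : ℤ, 𝒜 i →ₗ[R] N) : M →ₗ[R] N :=
  fromPiecesHom 𝒜 f

/-- Build a bilinear map `M →ₗ M →ₗ N` out of its values on pairs of homogeneous pieces. -/
noncomputable def fromPieces₂ {N : Type} [AddCommGroup N] [Module R N]
    (f : ∀ i j : ℤ, 𝒜 i →ₗ[R] 𝒜 j →ₗ[R] N) : M →ₗ[R] M →ₗ[R] N :=
  fromPieces 𝒜 (fun i => (fromPiecesHom 𝒜).comp (LinearMap.pi (fun j => f i j)))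

/-- The operator multiplying the degree `i` component by the Koszul sign `(-1)^(d*i)`. -/
noncomputable def signAction (d : ℤ) : M →ₗ[R] M :=
  fromPieces 𝒜 (fun i => ksign (d * i) • (𝒜 i).subtype)

/-- The Koszul twist `τ(a ⊗ b) = (-1)^{|a||b|} b ⊗ a`. -/
noncomputable def twist : M ⊗[R] M →ₗ[R] M ⊗[R] M :=
  TensorProduct.lift (fromPieces₂ 𝒜 (fun i j =>
    ksign (i * j) • ((((TensorProduct.mk R M M).flip).comp (𝒜 i).subtype).compl₂
      (𝒜 j).subtype)))

/-- Left contraction `(f ⊗ 1)(x ⊗ y) = f(x) • y` (no Koszul sign since `1` has degree `0`). -/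
noncomputable def contrL {N : Type} [AddCommGroup N] [Module R N]
    (f : N →ₗ[R] R) : N ⊗[R] M →ₗ[R] M :=
  TensorProduct.lift ((LinearMap.lsmul R M).comp f)

/-- Right contraction with Koszul sign:
`(1 ⊗ f)(x ⊗ y) = (-1)^{d|x|} f(y) • x` where `d` is the degree of `f`. -/
noncomputable def contrR {N : Type} [AddCommGroup N] [Module R N]
    (f : N →ₗ[R] R) (d : ℤ) : M ⊗[R] N →ₗ[R] M :=
  TensorProduct.lift ((((LinearMap.lsmul R M).comp f).flip).comp (signAction 𝒜 d))

/-- Koszul-signed evaluation of a pair of functionals on a tensor: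
`(x ⊗ y) ↦ f((-1)^{d₁|x|} x) * g((-1)^{d₂|y|} y)`. -/
noncomputable def ev2 (f g : M →ₗ[R] R) (d₁ d₂ : ℤ) : M ⊗[R] M →ₗ[R] R :=
  TensorProduct.lift (((LinearMap.mul R R).comp (f.comp (signAction 𝒜 d₁))).compl₂
    (g.comp (signAction 𝒜 d₂)))

/-- The map `c⃗ : A^∨ → A`, `f ↦ (-1)^{|f||c|}(f ⊗ 1)c`, implemented by putting the sign
`(-1)^{dc |x|}` on the first tensor factor of the copairing `c` (of degree `dc`). -/
noncomputable def cvec (c : M ⊗[R] M) (dc : ℤ) : (M →ₗ[R] R) →ₗ[R] M :=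
  (LinearMap.applyₗ ((LinearMap.rTensor M (signAction 𝒜 dc)) c)).comp
    ((TensorProduct.lift.equiv (RingHom.id R) M M M).toLinearMap.comp
      (LinearMap.llcomp R M R (M →ₗ[R] M) (LinearMap.lsmul R M)))

/-- The operation `(1 ⊗ c ⊗ 1) : A ⊗ A → (A ⊗ A) ⊗ (A ⊗ A)`,
`a ⊗ b ↦ (-1)^{|c||a|} (a ⊗ c₁) ⊗ (c₂ ⊗ b)` for a copairing `c` of degree `dc`. -/
noncomputable def midIns (c : M ⊗[R] M) (dc : ℤ) :
    M ⊗[R] M →ₗ[R] (M ⊗[R] M) ⊗[R] (M ⊗[R] M) :=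
  (TensorProduct.assoc R (M ⊗[R] M) M M).toLinearMap.comp
    (LinearMap.rTensor M
      (((TensorProduct.assoc R M M M).symm.toLinearMap).comp
        (((TensorProduct.mk R M (M ⊗[R] M)).flip c).comp (signAction 𝒜 dc))))

/-- The Koszul-signed cyclic permutation `σ(a⊗b⊗c) = (-1)^{(|a|+|b|)|c|} c⊗a⊗b`. -/
noncomputable def cyc : (M ⊗[R] M) ⊗[R] M →ₗ[R] (M ⊗[R] M) ⊗[R] M :=
  (LinearMap.rTensor M (twist 𝒜)).comp
    ((TensorProduct.assoc R M M M).symm.toLinearMap.comp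
      ((LinearMap.lTensor M (twist 𝒜)).comp (TensorProduct.assoc R M M M).toLinearMap))

/-- The submodule `A_i ⊗ A_j ⊆ A ⊗ A`. -/
noncomputable def tpiece (i j : ℤ) : Submodule R (M ⊗[R] M) :=
  LinearMap.range (TensorProduct.map (𝒜 i).subtype (𝒜 j).subtype)

/-- The degree `k` part `⨁_{i+j=k} A_i ⊗ A_j` of `A ⊗ A`. -/
noncomputable def tgrade (k : ℤ) : Submodule R (M ⊗[R] M) :=
  ⨆ i : ℤ, tpiece 𝒜 i (k - i)

/-- A product is homogeneous of degree `d`. -/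
def IsHomogProd (d : ℤ) (mu : M ⊗[R] M →ₗ[R] M) : Prop :=
  ∀ i j : ℤ, ∀ x ∈ 𝒜 i, ∀ y ∈ 𝒜 j, mu (x ⊗ₜ[R] y) ∈ 𝒜 (i + j + d)

/-- A coproduct is homogeneous of degree `d`. -/
def IsHomogCoprod (d : ℤ) (lam : M →ₗ[R] M ⊗[R] M) : Prop :=
  ∀ k : ℤ, ∀ x ∈ 𝒜 k, lam x ∈ tgrade 𝒜 (k + d)

/-- A scalar-valued functional is homogeneous of degree `d`. -/
def IsHomogFun (d : ℤ) (f : M →ₗ[R] R) : Prop :=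
  ∀ i : ℤ, i ≠ -d → ∀ x ∈ 𝒜 i, f x = 0

/-- A pairing is homogeneous of degree `d`. -/
def IsHomogPairing (d : ℤ) (p : M ⊗[R] M →ₗ[R] R) : Prop :=
  ∀ i j : ℤ, i + j ≠ -d → ∀ x ∈ 𝒜 i, ∀ y ∈ 𝒜 j, p (x ⊗ₜ[R] y) = 0

end GradedCoFrob
namespace GradedCoFrob

/-- A unital coFrobenius bialgebra structure on a ℤ-graded module
(Definition `defi:coFrobenius-unital-bialgebra`), with all Koszul sign conventions explicit. -/
structure UnitalCoFrob (R : Type) [CommRing R] {M : Type} [AddCommGroup M] [Module R M]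
    (𝒜 : ℤ → Submodule R M) [DirectSum.Decomposition 𝒜] where
  mu : M ⊗[R] M →ₗ[R] M
  lam : M →ₗ[R] M ⊗[R] M
  unit : M
  dm : ℤ
  dl : ℤ
  mu_homog : IsHomogProd 𝒜 dm mu
  lam_homog : IsHomogCoprod 𝒜 dl lam
  unit_homog : unit ∈ 𝒜 (-dm)
  /-- graded associativity `μ(μ⊗1) = (-1)^{|μ|} μ(1⊗μ)` -/
  mu_assoc : mu.comp (LinearMap.rTensor M mu) =
    ksign dm • (mu.comp ((TensorProduct.map (signAction 𝒜 dm) mu).comp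
      (TensorProduct.assoc R M M M).toLinearMap))
  /-- `(-1)^{|μ|} μ(η ⊗ 1) = 1` -/
  unit_left : ksign dm • (mu.comp ((TensorProduct.mk R M M) unit)) = LinearMap.id
  /-- `μ(1 ⊗ η) = 1` -/
  unit_right : mu.comp (((TensorProduct.mk R M M).flip unit).comp (signAction 𝒜 (-dm))) =
    LinearMap.id
  cop : M ⊗[R] M
  /-- the copairing `c = (-1)^{|λ||μ|+|μ|} λη` -/
  cop_def : cop = ksign (dl * dm + dm) • lam unit
  /-- `λ = (1⊗μ)(c⊗1)` -/
  cofrob_left : lam = (TensorProduct.map (signAction 𝒜 dm) mu).comp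
    ((TensorProduct.assoc R M M M).toLinearMap.comp (TensorProduct.mk R (M ⊗[R] M) M cop))
  /-- `λ = (-1)^{|μ|}(μ⊗1)(1⊗c)` -/
  cofrob_right : lam = ksign dm • ((LinearMap.rTensor M mu).comp
    ((TensorProduct.assoc R M M M).symm.toLinearMap.comp
      (((TensorProduct.mk R M (M ⊗[R] M)).flip cop).comp (signAction 𝒜 (dl - dm)))))
  /-- `τc = (-1)^{|λ|} c` -/
  cop_symm : twist 𝒜 cop = ksign dl • cop

/-- A biunital coFrobenius bialgebra structure on a ℤ-graded module
(Definition `defi:biunital-coFrobenius-bialgebra`), with all Koszul sign conventions explicit. -/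
structure BiunitalCoFrob (R : Type) [CommRing R] {M : Type} [AddCommGroup M] [Module R M]
    (𝒜 : ℤ → Submodule R M) [DirectSum.Decomposition 𝒜] where
  mu : M ⊗[R] M →ₗ[R] M
  lam : M →ₗ[R] M ⊗[R] M
  unit : M
  counit : M →ₗ[R] R
  dm : ℤ
  dl : ℤ
  mu_homog : IsHomogProd 𝒜 dm mu
  lam_homog : IsHomogCoprod 𝒜 dl lam
  unit_homog : unit ∈ 𝒜 (-dm)
  counit_homog : IsHomogFun 𝒜 (-dl) counit
  mu_assoc : mu.comp (LinearMap.rTensor M mu) =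
    ksign dm • (mu.comp ((TensorProduct.map (signAction 𝒜 dm) mu).comp
      (TensorProduct.assoc R M M M).toLinearMap))
  /-- graded coassociativity `(λ⊗1)λ = (-1)^{|λ|}(1⊗λ)λ` -/
  lam_coassoc : (LinearMap.rTensor M lam).comp lam =
    ksign dl • ((TensorProduct.assoc R M M M).symm.toLinearMap.comp
      ((TensorProduct.map (signAction 𝒜 dl) lam).comp lam))
  unit_left : ksign dm • (mu.comp ((TensorProduct.mk R M M) unit)) = LinearMap.id
  unit_right : mu.comp (((TensorProduct.mk R M M).flip unit).comp (signAction 𝒜 (-dm))) =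
    LinearMap.id
  /-- `(ε⊗1)λ = 1` -/
  counit_left : (contrL counit).comp lam = LinearMap.id
  /-- `(-1)^{|λ|}(1⊗ε)λ = 1` -/
  counit_right : ksign dl • ((contrR 𝒜 counit (-dl)).comp lam) = LinearMap.id
  cop : M ⊗[R] M
  cop_def : cop = ksign (dl * dm + dm) • lam unit
  pr : M ⊗[R] M →ₗ[R] R
  /-- the pairing `p = (-1)^{|λ|} εμ` -/
  pr_def : pr = ksign dl • (counit.comp mu)
  cofrob_left : lam = (TensorProduct.map (signAction 𝒜 dm) mu).comp
    ((TensorProduct.assoc R M M M).toLinearMap.comp (TensorProduct.mk R (M ⊗[R] M) M cop))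
  cofrob_right : lam = ksign dm • ((LinearMap.rTensor M mu).comp
    ((TensorProduct.assoc R M M M).symm.toLinearMap.comp
      (((TensorProduct.mk R M (M ⊗[R] M)).flip cop).comp (signAction 𝒜 (dl - dm)))))
  /-- `μ = (-1)^{|μ||λ|+|λ|}(p⊗1)(1⊗λ)` -/
  cofrob_pr_left : mu = ksign (dm * dl + dl) • ((contrL pr).comp
    ((TensorProduct.assoc R M M M).symm.toLinearMap.comp
      (TensorProduct.map (signAction 𝒜 dl) lam)))
  /-- `μ = (-1)^{|μ||λ|}(1⊗p)(λ⊗1)` -/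
  cofrob_pr_right : mu = ksign (dm * dl) • ((contrR 𝒜 pr (dm - dl)).comp
    ((TensorProduct.assoc R M M M).toLinearMap.comp (LinearMap.rTensor M lam)))
  cop_symm : twist 𝒜 cop = ksign dl • cop
  /-- `pτ = (-1)^{|μ|} p` -/
  pr_symm : pr.comp (twist 𝒜) = ksign dm • pr

end GradedCoFrob

namespace GradedCoFrob

section Infra
variable {R : Type} [CommRing R] {M : Type} [AddCommGroup M] [Module R M]
variable (𝒜 : ℤ → Submodule R M) [DirectSum.Decomposition 𝒜]

lemma ksign_add (a b : ℤ) : ksign (a + b) = ksign a * ksign b := by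
  unfold ksign; rw [zpow_add]; push_cast; ring

lemma ksign_neg (a : ℤ) : ksign (-a) = ksign a := by
  unfold ksign
  rw [zpow_neg]
  rcases Int.units_eq_one_or ((-1 : ℤˣ) ^ a) with h | h <;> rw [h] <;> rfl

lemma ksign_zero : ksign 0 = 1 := rfl

lemma ksign_mul_self (a : ℤ) : ksign a * ksign a = 1 := by
  unfold ksign
  rcases Int.units_eq_one_or ((-1 : ℤˣ) ^ a) with h | h <;> rw [h] <;> rfl

lemma ksign_smul_smul (a : ℤ) (x : M) : ksign a • ksign a • x = x := by
  rw [smul_smul, ksign_mul_self, one_smul]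

variable {𝒜}

lemma fromPieces_apply_coe {N : Type} [AddCommGroup N] [Module R N]
    (f : ∀ i : ℤ, 𝒜 i →ₗ[R] N) {i : ℤ} (y : 𝒜 i) : fromPieces 𝒜 f (y : M) = f i y := by
  rw [fromPieces, fromPiecesHom]
  simp only [LinearMap.comp_apply, LinearEquiv.coe_toLinearMap, LinearMap.lcomp_apply,
    DirectSum.decomposeLinearEquiv_apply, DirectSum.decompose_coe]
  exact DFinsupp.lsum_single _ _ _ _

lemma fromPieces_apply {N : Type} [AddCommGroup N] [Module R N] (f : ∀ i : ℤ, 𝒜 i →ₗ[R] N)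
    {i : ℤ} {x : M} (hx : x ∈ 𝒜 i) : fromPieces 𝒜 f x = f i ⟨x, hx⟩ :=
  fromPieces_apply_coe f (⟨x, hx⟩ : 𝒜 i)

lemma signAction_apply {d i : ℤ} {x : M} (hx : x ∈ 𝒜 i) :
    signAction 𝒜 d x = ksign (d * i) • x := by
  rw [signAction, fromPieces_apply _ hx]; rfl

lemma homog_induction {p : M → Prop} (h0 : p 0)
    (hhom : ∀ (i : ℤ) (x : M), x ∈ 𝒜 i → p x)
    (hadd : ∀ x y, p x → p y → p (x + y)) : ∀ x, p x :=
  DirectSum.Decomposition.inductionOn 𝒜 h0 (fun {i} m => hhom i m m.2) hadd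

lemma signAction_zero_apply (x : M) : signAction 𝒜 0 x = x := by
  induction x using homog_induction (𝒜 := 𝒜) with
  | h0 => exact map_zero _
  | hhom i x hx =>
      rw [signAction_apply hx, show (0:ℤ) * i = 0 from by ring, ksign_zero, one_smul]
  | hadd x y hx hy => rw [map_add, hx, hy]

lemma signAction_signAction {d : ℤ} (x : M) :
    signAction 𝒜 d (signAction 𝒜 d x) = x := by
  induction x using homog_induction (𝒜 := 𝒜) with
  | h0 => simp
  | hhom i x hx =>
      rw [signAction_apply hx, map_zsmul, signAction_apply hx, ksign_smul_smul]
  | hadd x y hx hy => rw [map_add, map_add, hx, hy]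

lemma homog_tensor_induction {N : Type} [AddCommGroup N] [Module R N]
    (ℬ : ℤ → Submodule R N) [DirectSum.Decomposition ℬ]
    {p : M ⊗[R] N → Prop} (h0 : p 0)
    (htmul : ∀ (i j : ℤ) (x : M) (y : N), x ∈ 𝒜 i → y ∈ ℬ j → p (x ⊗ₜ[R] y))
    (hadd : ∀ s t, p s → p t → p (s + t)) : ∀ t, p t := by
  intro t
  induction t using TensorProduct.induction_on with
  | zero => exact h0
  | add s t hs ht => exact hadd _ _ hs ht
  | tmul x y =>
      induction x using homog_induction (𝒜 := 𝒜) with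
      | h0 => rw [TensorProduct.zero_tmul]; exact h0
      | hadd x x' hx hx' => rw [TensorProduct.add_tmul]; exact hadd _ _ hx hx'
      | hhom i x hx =>
          induction y using homog_induction (𝒜 := ℬ) with
          | h0 => rw [TensorProduct.tmul_zero]; exact h0
          | hadd y y' hy hy' => rw [TensorProduct.tmul_add]; exact hadd _ _ hy hy'
          | hhom j y hy => exact htmul i j x y hx hy

/-- equality of linear maps out of a tensor product of graded modules can be checked on
homogeneous pure tensors -/
lemma ext_homog {N P : Type} [AddCommGroup N] [Module R N] [AddCommGroup P] [Module R P]
    (ℬ : ℤ → Submodule R N) [DirectSum.Decomposition ℬ]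
    {f g : M ⊗[R] N →ₗ[R] P}
    (h : ∀ (i j : ℤ) (x : M) (y : N), x ∈ 𝒜 i → y ∈ ℬ j →
      f (x ⊗ₜ[R] y) = g (x ⊗ₜ[R] y)) : f = g := by
  apply LinearMap.ext; intro t
  refine homog_tensor_induction (𝒜 := 𝒜) ℬ (p := fun t => f t = g t)
    (by simp) (fun i j x y hx hy => h i j x y hx hy)
    (fun s t hs ht => show f (s + t) = g (s + t) by
      rw [map_add, map_add]; exact congrArg₂ (· + ·) hs ht) t

lemma twist_tmul {i j : ℤ} {x y : M} (hx : x ∈ 𝒜 i) (hy : y ∈ 𝒜 j) :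
    twist 𝒜 (x ⊗ₜ[R] y) = ksign (i * j) • (y ⊗ₜ[R] x) := by
  rw [twist, TensorProduct.lift.tmul, fromPieces₂, fromPieces_apply _ hx]
  simp only [LinearMap.comp_apply]
  rw [show (fromPiecesHom 𝒜)
      ((LinearMap.pi fun j => ksign (i * j) •
        ((((TensorProduct.mk R M M).flip).comp (𝒜 i).subtype).compl₂ (𝒜 j).subtype))
        (⟨x, hx⟩ : 𝒜 i)) y
    = _ from fromPieces_apply _ hy]
  simp

end Infra
end GradedCoFrob

namespace GradedCoFrob

section Infra2
variable {R : Type} [CommRing R] {M : Type} [AddCommGroup M] [Module R M]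
variable {𝒜 : ℤ → Submodule R M} [DirectSum.Decomposition 𝒜]

lemma tgrade_induction {l : ℤ} {p : M ⊗[R] M → Prop} (h0 : p 0)
    (htmul : ∀ (i : ℤ) (x y : M), x ∈ 𝒜 i → y ∈ 𝒜 (l - i) → p (x ⊗ₜ[R] y))
    (hadd : ∀ s t, p s → p t → p (s + t)) : ∀ t ∈ tgrade 𝒜 l, p t := by
  intro t ht
  refine Submodule.iSup_induction (motive := p) _ ht ?_ h0 hadd
  rintro i s ⟨w, rfl⟩
  induction w using TensorProduct.induction_on with
  | zero => simpa using h0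
  | add a b ha hb => rw [map_add]; exact hadd _ _ ha hb
  | tmul a b =>
      rw [TensorProduct.map_tmul]
      exact htmul i _ _ a.2 b.2

lemma contrL_tmul {N : Type} [AddCommGroup N] [Module R N] (f : N →ₗ[R] R)
    (n : N) (x : M) : contrL (M := M) f (n ⊗ₜ[R] x) = f n • x := by
  simp [contrL]

lemma contrR_tmul {N : Type} [AddCommGroup N] [Module R N] (f : N →ₗ[R] R) (d : ℤ)
    {i : ℤ} {x : M} (hx : x ∈ 𝒜 i) (n : N) :
    contrR 𝒜 f d (x ⊗ₜ[R] n) = ksign (d * i) • f n • x := by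
  rw [contrR, TensorProduct.lift.tmul]
  simp only [LinearMap.comp_apply, signAction_apply hx, LinearMap.map_smul_of_tower,
    LinearMap.flip_apply, LinearMap.lsmul_apply, LinearMap.smul_apply]

/-- The mixed Koszul twist `M ⊗ N → N ⊗ M`. -/
noncomputable def mtwist {N : Type} [AddCommGroup N] [Module R N]
    (𝒜 : ℤ → Submodule R M) (ℬ : ℤ → Submodule R N)
    [DirectSum.Decomposition 𝒜] [DirectSum.Decomposition ℬ] : M ⊗[R] N →ₗ[R] N ⊗[R] M :=
  TensorProduct.lift (fromPieces 𝒜 (fun i => (fromPiecesHom ℬ).comp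
    (LinearMap.pi (fun j => ksign (i * j) •
      ((((TensorProduct.mk R N M).flip).comp (𝒜 i).subtype).compl₂ (ℬ j).subtype)))))

lemma mtwist_tmul {N : Type} [AddCommGroup N] [Module R N]
    {ℬ : ℤ → Submodule R N} [DirectSum.Decomposition ℬ]
    {i j : ℤ} {x : M} {y : N} (hx : x ∈ 𝒜 i) (hy : y ∈ ℬ j) :
    mtwist 𝒜 ℬ (x ⊗ₜ[R] y) = ksign (i * j) • (y ⊗ₜ[R] x) := by
  rw [mtwist, TensorProduct.lift.tmul, fromPieces_apply _ hx]
  simp only [LinearMap.comp_apply]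
  rw [show (fromPiecesHom ℬ)
      ((LinearMap.pi fun j => ksign (i * j) •
        ((((TensorProduct.mk R N M).flip).comp (𝒜 i).subtype).compl₂ (ℬ j).subtype))
        (⟨x, hx⟩ : 𝒜 i)) y
    = _ from fromPieces_apply _ hy]
  simp

end Infra2
end GradedCoFrob

namespace GradedCoFrob

section Infra3
variable {R : Type} [CommRing R] {M : Type} [AddCommGroup M] [Module R M]
variable {𝒜 : ℤ → Submodule R M} [DirectSum.Decomposition 𝒜]

lemma ksign_self_add (n : ℤ) : ksign (n + n) = 1 := by
  rw [ksign_add, ksign_mul_self]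

lemma ksign_add_self_add (x n : ℤ) : ksign (x + (n + n)) = ksign x := by
  rw [ksign_add, ksign_self_add, mul_one]

lemma signAction_zero' : signAction 𝒜 0 = LinearMap.id :=
  LinearMap.ext signAction_zero_apply

/-- contraction of the second factor against a functional -/
noncomputable def psi {N : Type} [AddCommGroup N] [Module R N] (f : N →ₗ[R] R) :
    M ⊗[R] N →ₗ[R] M :=
  TensorProduct.lift (((LinearMap.lsmul R M).comp f).flip)

lemma psi_tmul {N : Type} [AddCommGroup N] [Module R N] (f : N →ₗ[R] R) (x : M) (n : N) :
    psi f (x ⊗ₜ[R] n) = f n • x := by simp [psi]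

end Infra3
end GradedCoFrob

namespace GradedCoFrob

/-- In a graded 2D open-closed TQFT (relations (1)–(5): commutative and
cocommutative biunital coFrobenius closed sector `C`, biunital coFrobenius open sector
`A`, products of degree `0`, zipper `ζ : C → A` an algebra map of degree `0` landing in
the center of `μ_A`, cozipper `ζ* : A → C` of degree `|λ_C|-|λ_A|` with
`(1⊗ζ)c_C = (ζ*⊗1)c_A`), the additional relations hold:
(a) `(ζ⊗1)c_C = (-1)^{|λ_C|+|λ_A|}(1⊗ζ*)c_A`, and
(b) `μ_C(ζ*⊗1) = ζ*μ_A(1⊗ζ)`, i.e. the cozipper intertwines the right `C`-module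
structures, `A` being a `C`-module via `ζ`. -/
theorem tqft_additional_relations {R : Type} [CommRing R]
    {C : Type} [AddCommGroup C] [Module R C] [Module.Free R C] [Module.Finite R C]
    {A : Type} [AddCommGroup A] [Module R A] [Module.Free R A] [Module.Finite R A]
    (𝒜 : ℤ → Submodule R C) [DirectSum.Decomposition 𝒜]
    (ℬ : ℤ → Submodule R A) [DirectSum.Decomposition ℬ]
    (BC : BiunitalCoFrob R 𝒜) (BA : BiunitalCoFrob R ℬ)
    (hdmC : BC.dm = 0) (hdmA : BA.dm = 0)
    -- (1) the closed sector is commutative and cocommutative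
    (hcommC : BC.mu.comp (twist 𝒜) = ksign BC.dm • BC.mu)
    (hcocommC : (twist 𝒜).comp BC.lam = ksign BC.dl • BC.lam)
    (zip : C →ₗ[R] A) (cozip : A →ₗ[R] C)
    (hzip_homog : ∀ i : ℤ, ∀ x ∈ 𝒜 i, zip x ∈ ℬ i)
    (hcozip_homog : ∀ i : ℤ, ∀ x ∈ ℬ i, cozip x ∈ 𝒜 (i + (BC.dl - BA.dl)))
    -- (3) the zipper is an algebra homomorphism
    (hzip_mul : BA.mu.comp (TensorProduct.map zip zip) = zip.comp BC.mu)
    (hzip_unit : zip BC.unit = BA.unit)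
    -- (4) the zipper lands in the center of μ_A
    (hcenter : BA.mu.comp (LinearMap.rTensor A zip) =
      BA.mu.comp ((twist ℬ).comp (LinearMap.rTensor A zip)))
    -- (5) the cozipper is dual to the zipper
    (hdual : LinearMap.lTensor C zip BC.cop = LinearMap.rTensor A cozip BA.cop) :
    -- (a) (ζ⊗1)c_C = (-1)^{|λ_C|+|λ_A|}(1⊗ζ*)c_A
    (LinearMap.rTensor C zip BC.cop =
      ksign (BC.dl + BA.dl) •
        ((TensorProduct.map (signAction ℬ (BC.dl - BA.dl)) cozip) BA.cop)) ∧
    -- (b) μ_C(ζ*⊗1) = ζ*μ_A(1⊗ζ)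
    (BC.mu.comp (LinearMap.rTensor C cozip) =
      cozip.comp (BA.mu.comp (LinearMap.lTensor A zip))) := by
  constructor
  · -- part (a)
    have L1 : ∀ t : C ⊗[R] C,
        mtwist 𝒜 ℬ (LinearMap.lTensor C zip t) = LinearMap.rTensor C zip (twist 𝒜 t) := by
      refine homog_tensor_induction (𝒜 := 𝒜) 𝒜
        (by simp) ?_ (fun s t hs ht => by simp only [map_add, hs, ht])
      intro i j x y hx hy
      rw [LinearMap.lTensor_tmul, mtwist_tmul hx (hzip_homog j y hy), twist_tmul hx hy,
        map_zsmul, LinearMap.rTensor_tmul]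
    have L2 : ∀ s : A ⊗[R] A,
        mtwist 𝒜 ℬ (LinearMap.rTensor A cozip s) =
          (TensorProduct.map (signAction ℬ (BC.dl - BA.dl)) cozip) (twist ℬ s) := by
      refine homog_tensor_induction (𝒜 := ℬ) ℬ
        (by simp) ?_ (fun s t hs ht => by simp only [map_add, hs, ht])
      intro i j u v hu hv
      rw [LinearMap.rTensor_tmul, mtwist_tmul (hcozip_homog i u hu) hv, twist_tmul hu hv,
        map_zsmul, TensorProduct.map_tmul, signAction_apply hv]
      rw [show (i + (BC.dl - BA.dl)) * j = i * j + ((BC.dl - BA.dl) * j) by ring, ksign_add,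
        ← smul_smul]
      rw [TensorProduct.smul_tmul']
    have h1 : BC.cop = ksign BC.dl • twist 𝒜 BC.cop := by
      rw [BC.cop_symm, ksign_smul_smul]
    calc LinearMap.rTensor C zip BC.cop
        = ksign BC.dl • LinearMap.rTensor C zip (twist 𝒜 BC.cop) := by
          rw [← map_zsmul, ← h1]
      _ = ksign BC.dl • mtwist 𝒜 ℬ (LinearMap.lTensor C zip BC.cop) := by rw [L1]
      _ = ksign BC.dl • mtwist 𝒜 ℬ (LinearMap.rTensor A cozip BA.cop) := by rw [hdual]
      _ = ksign BC.dl •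
          (TensorProduct.map (signAction ℬ (BC.dl - BA.dl)) cozip) (twist ℬ BA.cop) := by
          rw [L2]
      _ = ksign (BC.dl + BA.dl) •
          (TensorProduct.map (signAction ℬ (BC.dl - BA.dl)) cozip) BA.cop := by
          rw [BA.cop_symm, map_zsmul, smul_smul, ← ksign_add]
  · -- part (b)
    -- elementwise versions of the hypotheses
    have muA_assoc : ∀ p q r : A,
        BA.mu (BA.mu (p ⊗ₜ[R] q) ⊗ₜ[R] r) = BA.mu (p ⊗ₜ[R] BA.mu (q ⊗ₜ[R] r)) := by
      intro p q r
      have h := congrArg (fun (F : (A ⊗[R] A) ⊗[R] A →ₗ[R] A) => F ((p ⊗ₜ q) ⊗ₜ r)) BA.mu_assoc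
      simpa only [hdmA, ksign_zero, one_smul, LinearMap.comp_apply, LinearMap.rTensor_tmul,
        LinearMap.smul_apply, LinearEquiv.coe_toLinearMap, TensorProduct.assoc_tmul,
        TensorProduct.map_tmul, signAction_zero', LinearMap.id_apply] using h
    have commC : ∀ (i k : ℤ) (w x : C), w ∈ 𝒜 i → x ∈ 𝒜 k →
        BC.mu (w ⊗ₜ[R] x) = ksign (i * k) • BC.mu (x ⊗ₜ[R] w) := by
      intro i k w x hw hx
      have h := congrArg (fun (F : C ⊗[R] C →ₗ[R] C) => F (w ⊗ₜ x)) hcommC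
      simp only [hdmC, ksign_zero, one_smul, LinearMap.comp_apply] at h
      rw [twist_tmul hw hx, map_zsmul] at h
      exact h.symm
    have centA : ∀ (k j : ℤ) (x : C) (b : A), x ∈ 𝒜 k → b ∈ ℬ j →
        BA.mu (b ⊗ₜ[R] zip x) = ksign (k * j) • BA.mu (zip x ⊗ₜ[R] b) := by
      intro k j x b hx hb
      have h := congrArg (fun (F : C ⊗[R] A →ₗ[R] A) => F (x ⊗ₜ b)) hcenter
      simp only [LinearMap.comp_apply, LinearMap.rTensor_tmul] at h
      rw [twist_tmul (hzip_homog k x hx) hb, map_zsmul] at h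
      rw [h, smul_smul, ksign_mul_self, one_smul]
    have zipmul : ∀ x y : C, BA.mu (zip x ⊗ₜ[R] zip y) = zip (BC.mu (x ⊗ₜ[R] y)) := by
      intro x y
      have h := congrArg (fun (F : C ⊗[R] C →ₗ[R] A) => F (x ⊗ₜ y)) hzip_mul
      simpa using h
    have epsA_zero : ∀ (j : ℤ) (b : A), j ≠ BA.dl → b ∈ ℬ j → BA.counit b = 0 := by
      intro j b hj hb
      exact BA.counit_homog j (by omega) b hb
    have muA_mem : ∀ (i j : ℤ) (p q : A), p ∈ ℬ i → q ∈ ℬ j →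
        BA.mu (p ⊗ₜ[R] q) ∈ ℬ (i + j) := by
      intro i j p q hp hq
      have h := BA.mu_homog i j p hp q hq
      rwa [hdmA, add_zero] at h
    have copA_mem : BA.cop ∈ tgrade ℬ BA.dl := by
      rw [BA.cop_def]
      refine Submodule.smul_of_tower_mem _ _ ?_
      have h := BA.lam_homog (-BA.dm) BA.unit BA.unit_homog
      rwa [hdmA, neg_zero, zero_add] at h
    have copC_mem : BC.cop ∈ tgrade 𝒜 BC.dl := by
      rw [BC.cop_def]
      refine Submodule.smul_of_tower_mem _ _ ?_
      have h := BC.lam_homog (-BC.dm) BC.unit BC.unit_homog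
      rwa [hdmC, neg_zero, zero_add] at h
    -- λ in terms of the copairing
    have lamA_left : ∀ v : A, BA.lam v =
        (TensorProduct.map LinearMap.id BA.mu)
          ((TensorProduct.assoc R A A A) (BA.cop ⊗ₜ[R] v)) := by
      intro v
      have h := congrArg (fun (F : A →ₗ[R] A ⊗[R] A) => F v) BA.cofrob_left
      simpa only [hdmA, signAction_zero', LinearMap.comp_apply,
        LinearEquiv.coe_toLinearMap, TensorProduct.mk_apply] using h
    have lamC_left : ∀ v : C, BC.lam v =
        (TensorProduct.map LinearMap.id BC.mu)
          ((TensorProduct.assoc R C C C) (BC.cop ⊗ₜ[R] v)) := by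
      intro v
      have h := congrArg (fun (F : C →ₗ[R] C ⊗[R] C) => F v) BC.cofrob_left
      simpa only [hdmC, signAction_zero', LinearMap.comp_apply,
        LinearEquiv.coe_toLinearMap, TensorProduct.mk_apply] using h
    have lamC_right : ∀ (k : ℤ) (x : C), x ∈ 𝒜 k →
        LinearMap.rTensor C (BC.mu ∘ₗ (TensorProduct.mk R C C x)) BC.cop
          = ksign (BC.dl * k) • BC.lam x := by
      intro k x hx
      have h := congrArg (fun (F : C →ₗ[R] C ⊗[R] C) => F x) BC.cofrob_right
      simp only [hdmC, ksign_zero, one_smul, sub_zero, LinearMap.comp_apply,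
        LinearMap.smul_apply, LinearEquiv.coe_toLinearMap, LinearMap.flip_apply,
        TensorProduct.mk_apply] at h
      rw [signAction_apply hx, ← TensorProduct.smul_tmul', map_zsmul, map_zsmul] at h
      have e : ∀ t : C ⊗[R] C, LinearMap.rTensor C BC.mu
          ((TensorProduct.assoc R C C C).symm (x ⊗ₜ[R] t))
          = LinearMap.rTensor C (BC.mu ∘ₗ (TensorProduct.mk R C C x)) t := by
        intro t
        induction t using TensorProduct.induction_on with
        | zero => simp
        | tmul w b => simp [TensorProduct.assoc_symm_tmul]
        | add s t hs ht => rw [TensorProduct.tmul_add, map_add, map_add, hs, ht, map_add]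
      rw [e BC.cop] at h
      rw [h, ksign_smul_smul]
    -- the cozipper expressed through the closed copairing (adjunction)
    have hADJ : ∀ (α : ℤ) (a : A), a ∈ ℬ α →
        cozip a = ksign (BA.dl + BA.dl * α) •
          psi ((BA.counit ∘ₗ BA.mu ∘ₗ (TensorProduct.mk R A A).flip a) ∘ₗ zip) BC.cop := by
      intro α a ha
      set fa : A →ₗ[R] R := BA.counit ∘ₗ BA.mu ∘ₗ (TensorProduct.mk R A A).flip a with hfa
      have hfa_apply : ∀ b : A, fa b = BA.counit (BA.mu (b ⊗ₜ[R] a)) := by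
        intro b; simp [hfa]
      -- snake on A
      have h0 : ksign BA.dl • contrR ℬ BA.counit (-BA.dl) (BA.lam a) = a := by
        have h := congrArg (fun (F : A →ₗ[R] A) => F a) BA.counit_right
        simpa only [LinearMap.smul_apply, LinearMap.comp_apply, LinearMap.id_apply] using h
      have G1 : ∀ t : A ⊗[R] A, contrR ℬ BA.counit (-BA.dl)
          ((TensorProduct.map LinearMap.id BA.mu) ((TensorProduct.assoc R A A A) (t ⊗ₜ[R] a)))
          = psi fa (LinearMap.rTensor A (signAction ℬ BA.dl) t) := by
        refine homog_tensor_induction (𝒜 := ℬ) ℬ (by simp) ?_ ?_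
        · intro i j w b hw hb
          rw [TensorProduct.assoc_tmul, TensorProduct.map_tmul, LinearMap.id_apply,
            contrR_tmul BA.counit (-BA.dl) hw, LinearMap.rTensor_tmul,
            signAction_apply hw, ← TensorProduct.smul_tmul', map_zsmul,
            psi_tmul, hfa_apply, show (-BA.dl) * i = -(BA.dl * i) by ring, ksign_neg]
        · intro s t hs ht
          simp only [TensorProduct.add_tmul, map_add, hs, ht]
      have SUPPA : ∀ t ∈ tgrade ℬ BA.dl,
          psi fa (LinearMap.rTensor A (signAction ℬ BA.dl) t)
            = ksign (BA.dl * α) • psi fa t := by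
        refine tgrade_induction (by simp) ?_ ?_
        · intro i w b hw hb
          rw [LinearMap.rTensor_tmul, signAction_apply hw, ← TensorProduct.smul_tmul',
            map_zsmul, psi_tmul]
          by_cases hia : i = α
          · rw [hia]
          · rw [hfa_apply, epsA_zero (BA.dl - i + α) _ (by omega) (muA_mem _ _ _ _ hb ha),
              zero_smul, smul_zero, smul_zero]
        · intro s t hs ht
          simp only [map_add, hs, ht, smul_add]
      rw [lamA_left a, G1 BA.cop, SUPPA BA.cop copA_mem] at h0
      -- transport along duality
      have hswap1 : ∀ t : C ⊗[R] C,
          psi fa (LinearMap.lTensor C zip t) = psi (fa ∘ₗ zip) t := by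
        intro t
        induction t using TensorProduct.induction_on with
        | zero => simp
        | tmul w b => simp [psi_tmul, hfa]
        | add s t hs ht => simp only [map_add, hs, ht]
      have hswap2 : ∀ s : A ⊗[R] A,
          psi fa (LinearMap.rTensor A cozip s) = cozip (psi fa s) := by
        intro s
        induction s using TensorProduct.induction_on with
        | zero => simp
        | tmul w b => rw [LinearMap.rTensor_tmul, psi_tmul, psi_tmul, map_smul]
        | add s t hs ht => simp only [map_add, hs, ht]
      have hinv : psi fa BA.cop = ksign (BA.dl * α) • ksign BA.dl • a := by
        rw [← h0, ksign_smul_smul, ksign_smul_smul]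
      have key : psi (fa ∘ₗ zip) BC.cop = ksign (BA.dl * α) • ksign BA.dl • cozip a := by
        rw [← hswap1 BC.cop, hdual, hswap2 BA.cop, hinv, map_zsmul, map_zsmul]
      rw [key, smul_smul, smul_smul, ← ksign_add, ← ksign_add,
        show BA.dl + BA.dl * α + BA.dl * α + BA.dl
          = 0 + ((BA.dl + BA.dl * α) + (BA.dl + BA.dl * α)) by ring, ksign_add_self_add,
        ksign_zero, one_smul]
    -- final assembly of part (b)
    refine ext_homog (𝒜 := ℬ) 𝒜 ?_
    intro α k a x ha hx
    simp only [LinearMap.comp_apply, LinearMap.rTensor_tmul, LinearMap.lTensor_tmul]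
    have ha' : BA.mu (a ⊗ₜ[R] zip x) ∈ ℬ (α + k) := muA_mem _ _ _ _ ha (hzip_homog k x hx)
    have hmix : ∀ (g : C →ₗ[R] R) (t : C ⊗[R] C),
        BC.mu (psi g t ⊗ₜ[R] x)
          = psi g (LinearMap.rTensor C (BC.mu ∘ₗ (TensorProduct.mk R C C).flip x) t) := by
      intro g t
      induction t using TensorProduct.induction_on with
      | zero => simp
      | tmul w b =>
          rw [psi_tmul, ← TensorProduct.smul_tmul', map_smul, LinearMap.rTensor_tmul,
            psi_tmul, LinearMap.comp_apply, LinearMap.flip_apply, TensorProduct.mk_apply]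
      | add s t hs ht => simp only [map_add, TensorProduct.add_tmul, hs, ht]
    have hSGN : ∀ t ∈ tgrade 𝒜 BC.dl, LinearMap.rTensor C (signAction 𝒜 k) t
        = ksign (k * BC.dl) • LinearMap.lTensor C (signAction 𝒜 k) t := by
      refine tgrade_induction (by simp) ?_ ?_
      · intro i w b hw hb
        rw [LinearMap.rTensor_tmul, LinearMap.lTensor_tmul, signAction_apply hw,
          signAction_apply hb, ← TensorProduct.smul_tmul', TensorProduct.tmul_smul,
          smul_smul, ← ksign_add,
          show k * BC.dl + k * (BC.dl - i) = k * i + (k * (BC.dl - i) + k * (BC.dl - i))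
            by ring, ksign_add_self_add]
      · intro s t hs ht
        simp only [map_add, hs, ht, smul_add]
    have hcommute : ∀ t : C ⊗[R] C,
        LinearMap.rTensor C (BC.mu ∘ₗ TensorProduct.mk R C C x)
            (LinearMap.lTensor C (signAction 𝒜 k) t)
        = LinearMap.lTensor C (signAction 𝒜 k)
            (LinearMap.rTensor C (BC.mu ∘ₗ TensorProduct.mk R C C x) t) := by
      intro t
      rw [← LinearMap.comp_apply, ← LinearMap.comp_apply, LinearMap.rTensor_comp_lTensor,
        LinearMap.lTensor_comp_rTensor]
    have hflipmul : ∀ t : C ⊗[R] C,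
        LinearMap.rTensor C (BC.mu ∘ₗ (TensorProduct.mk R C C).flip x) t
        = LinearMap.rTensor C (BC.mu ∘ₗ TensorProduct.mk R C C x)
            (LinearMap.rTensor C (signAction 𝒜 k) t) := by
      refine homog_tensor_induction (𝒜 := 𝒜) 𝒜 (by simp) ?_
        (fun s t hs ht => by simp only [map_add, hs, ht])
      intro i j w b hw hb
      rw [LinearMap.rTensor_tmul, LinearMap.rTensor_tmul, signAction_apply hw,
        ← TensorProduct.smul_tmul', map_zsmul, LinearMap.rTensor_tmul]
      simp only [LinearMap.comp_apply, LinearMap.flip_apply, TensorProduct.mk_apply]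
      rw [commC i k w x hw hx, ← TensorProduct.smul_tmul', mul_comm i k]
    have hI3 : LinearMap.rTensor C (BC.mu ∘ₗ (TensorProduct.mk R C C).flip x) BC.cop
        = LinearMap.lTensor C (signAction 𝒜 k) (BC.lam x) := by
      rw [hflipmul BC.cop, hSGN BC.cop copC_mem, map_zsmul, hcommute BC.cop,
        lamC_right k x hx, map_zsmul, show BC.dl * k = k * BC.dl from mul_comm _ _,
        ksign_smul_smul]
    have hCL : LinearMap.lTensor C (BC.mu ∘ₗ (TensorProduct.mk R C C).flip x) BC.cop
        = BC.lam x := by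
      have e : ∀ t : C ⊗[R] C, (TensorProduct.map LinearMap.id BC.mu)
          ((TensorProduct.assoc R C C C) (t ⊗ₜ[R] x))
          = LinearMap.lTensor C (BC.mu ∘ₗ (TensorProduct.mk R C C).flip x) t := by
        intro t
        induction t using TensorProduct.induction_on with
        | zero => simp
        | tmul w b => simp [TensorProduct.assoc_tmul]
        | add s t hs ht => simp only [TensorProduct.add_tmul, map_add, hs, ht]
      rw [lamC_left x]
      exact (e BC.cop).symm
    have hSUPPC : ∀ t : C ⊗[R] C,
        psi ((BA.counit ∘ₗ BA.mu ∘ₗ (TensorProduct.mk R A A).flip a) ∘ₗ zip) (LinearMap.lTensor C (signAction 𝒜 k) t)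
          = ksign (k * (BA.dl - α)) • psi ((BA.counit ∘ₗ BA.mu ∘ₗ (TensorProduct.mk R A A).flip a) ∘ₗ zip) t := by
      refine homog_tensor_induction (𝒜 := 𝒜) 𝒜 (by simp) ?_
        (fun s t hs ht => by simp only [map_add, hs, ht, smul_add])
      intro i j w b hw hb
      rw [LinearMap.lTensor_tmul, signAction_apply hb, TensorProduct.tmul_smul, map_zsmul,
        psi_tmul]
      by_cases hj : j = BA.dl - α
      · rw [hj]
      · rw [show ((BA.counit ∘ₗ BA.mu ∘ₗ (TensorProduct.mk R A A).flip a) ∘ₗ zip) b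
            = BA.counit (BA.mu (zip b ⊗ₜ[R] a)) from rfl,
          epsA_zero (j + α) _ (by omega) (muA_mem _ _ _ _ (hzip_homog j b hb) ha),
          zero_smul, smul_zero, smul_zero]
    have hXIII : ∀ t : C ⊗[R] C,
        LinearMap.lTensor C ((BC.mu ∘ₗ TensorProduct.mk R C C x) ∘ₗ signAction 𝒜 k) t
          = LinearMap.lTensor C (BC.mu ∘ₗ (TensorProduct.mk R C C).flip x) t := by
      refine homog_tensor_induction (𝒜 := 𝒜) 𝒜 (by simp) ?_
        (fun s t hs ht => by simp only [map_add, hs, ht])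
      intro i j w b hw hb
      rw [LinearMap.lTensor_tmul, LinearMap.lTensor_tmul]
      simp only [LinearMap.comp_apply, LinearMap.flip_apply, TensorProduct.mk_apply]
      rw [signAction_apply hb, TensorProduct.tmul_smul, map_zsmul, TensorProduct.tmul_smul,
        commC j k b x hb hx, TensorProduct.tmul_smul, mul_comm j k]
    have hXII : ∀ t : C ⊗[R] C, psi ((BA.counit ∘ₗ BA.mu ∘ₗ (TensorProduct.mk R A A).flip (BA.mu (a ⊗ₜ[R] zip x))) ∘ₗ zip) t
        = ksign (k * α) • psi ((BA.counit ∘ₗ BA.mu ∘ₗ (TensorProduct.mk R A A).flip a) ∘ₗ zip)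
            (LinearMap.lTensor C ((BC.mu ∘ₗ TensorProduct.mk R C C x) ∘ₗ signAction 𝒜 k) t) := by
      refine homog_tensor_induction (𝒜 := 𝒜) 𝒜 (by simp) ?_
        (fun s t hs ht => by simp only [map_add, hs, ht, smul_add])
      intro i j w b hw hb
      have hGb : ((BC.mu ∘ₗ TensorProduct.mk R C C x) ∘ₗ signAction 𝒜 k) b
          = ksign (k * j) • BC.mu (x ⊗ₜ[R] b) := by
        simp only [LinearMap.comp_apply, TensorProduct.mk_apply]
        rw [signAction_apply hb, TensorProduct.tmul_smul, map_zsmul]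
      have hscal : ((BA.counit ∘ₗ BA.mu ∘ₗ (TensorProduct.mk R A A).flip (BA.mu (a ⊗ₜ[R] zip x))) ∘ₗ zip) b
          = ksign (k * α) • (ksign (k * j) • ((BA.counit ∘ₗ BA.mu ∘ₗ (TensorProduct.mk R A A).flip a) ∘ₗ zip) (BC.mu (x ⊗ₜ[R] b))) := by
        show BA.counit (BA.mu (zip b ⊗ₜ[R] BA.mu (a ⊗ₜ[R] zip x)))
          = ksign (k * α) • (ksign (k * j)
              • BA.counit (BA.mu (zip (BC.mu (x ⊗ₜ[R] b)) ⊗ₜ[R] a)))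
        rw [← muA_assoc, centA k (j + α) x _ hx (muA_mem _ _ _ _ (hzip_homog j b hb) ha),
          map_zsmul, ← muA_assoc, zipmul, smul_smul, ← ksign_add,
          show k * α + k * j = k * (j + α) by ring]
      rw [psi_tmul, LinearMap.lTensor_tmul, hGb, TensorProduct.tmul_smul, map_zsmul,
        psi_tmul, hscal, smul_assoc, smul_assoc]
    have hL : BC.mu (cozip a ⊗ₜ[R] x)
        = (ksign (BA.dl + BA.dl * α) * ksign (k * (BA.dl - α))) • psi ((BA.counit ∘ₗ BA.mu ∘ₗ (TensorProduct.mk R A A).flip a) ∘ₗ zip) (BC.lam x) := by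
      rw [hADJ α a ha, ← TensorProduct.smul_tmul', map_zsmul, hmix ((BA.counit ∘ₗ BA.mu ∘ₗ (TensorProduct.mk R A A).flip a) ∘ₗ zip) BC.cop,
        hI3, hSUPPC (BC.lam x), smul_smul]
    have hR : cozip (BA.mu (a ⊗ₜ[R] zip x))
        = (ksign (BA.dl + BA.dl * (α + k)) * ksign (k * α)) • psi ((BA.counit ∘ₗ BA.mu ∘ₗ (TensorProduct.mk R A A).flip a) ∘ₗ zip) (BC.lam x) := by
      rw [hADJ (α + k) _ ha', hXII BC.cop, hXIII BC.cop, hCL, smul_smul]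
    rw [hL, hR]
    congr 1
    rw [← ksign_add, ← ksign_add,
      show BA.dl + BA.dl * α + k * (BA.dl - α)
        = (BA.dl + BA.dl * (α + k) + k * α) + (-(k * α) + -(k * α)) by ring,
      ksign_add_self_add]

end GradedCoFrob
end

section
/- Let n ≥ 3 be odd and let A = R[U]/(no relation) ⊗ Λ[A'] be the exterior algebra Λ[A', U] (|U| = n-1 even, |A'| = -n odd, A'² = 0) modeling the loop homology of S^n, with commutative product μ given by multiplication, unit η = 1, and coproduct λ defined by λ(A'U^k) = Σ_{i+j=k-1, i,j≥0} A'U^i ⊗ A'U^j and λ(U^k) = Σ_{i+j=k-1, i,j≥0} (A'U^i ⊗ U^j - U^i ⊗ A'U^j). Then λη = 0, λ is (skew-)coassociative of odd degree 1-2n, and Sullivan's relation holds: λμ = (1⊗μ)(λ⊗1) + (μ⊗1)(1⊗λ). -/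
open TensorProduct LinearMap
open scoped TensorProduct

namespace SphereLoop

/-- The degree of the basis monomial `A'^s U^k` of `Λ[A',U]` for the sphere `S^n`:
`|U| = n-1`, `|A'| = -n`. -/
def deg (n : ℤ) (p : Bool × ℕ) : ℤ := (n - 1) * (p.2 : ℤ) - n * (if p.1 then 1 else 0)

private lemma key {M : Type*} [AddCommMonoid M] (k : ℕ) (F : ℕ → ℕ → M) :
    ∑ i ∈ Finset.range k, ∑ j ∈ Finset.range i, F j (i - 1 - j)
      = ∑ i ∈ Finset.range k, ∑ j ∈ Finset.range (k - 1 - i), F i j := by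
  induction k with
  | zero => simp
  | succ k ih =>
    rw [Finset.sum_range_succ, ih, Finset.sum_range_succ (f := fun i => ∑ j ∈ Finset.range (k + 1 - 1 - i), F i j)]
    have h0 : k + 1 - 1 - k = 0 := by omega
    rw [h0]
    simp only [Finset.range_zero, Finset.sum_empty, add_zero]
    have h1 : ∀ i ∈ Finset.range k, ∑ j ∈ Finset.range (k + 1 - 1 - i), F i j
        = (∑ j ∈ Finset.range (k - 1 - i), F i j) + F i (k - 1 - i) := by
      intro i hi
      have : k + 1 - 1 - i = (k - 1 - i) + 1 := by
        have := Finset.mem_range.mp hi; omega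
      rw [this, Finset.sum_range_succ]
    rw [Finset.sum_congr rfl h1, Finset.sum_add_distrib]

/-- Let `n ≥ 3` be odd and let `A = Λ[A',U]` be the free module with basis
`{A'^s U^k}` (`|U| = n-1` even, `|A'| = -n` odd, `A'² = 0`), modeling the loop homology
of `S^n`, equipped with the graded-commutative product `μ` (basis multiplication, with
`A'² = 0`), unit `η = 1 = A'^0 U^0`, and coproduct
`λ(A'U^k) = Σ_{i+j=k-1, i,j≥0} A'U^i ⊗ A'U^j`,
`λ(U^k) = Σ_{i+j=k-1, i,j≥0} (A'U^i ⊗ U^j - U^i ⊗ A'U^j)`.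
Then `λη = 0`, `λ` is homogeneous of odd degree `1-2n` and skew-coassociative
(`(λ⊗1)λ = -(1⊗λ)λ`, the Koszul sign of `1⊗λ` being implemented by the parity operator
`par`, which on a monomial of degree `d` is multiplication by `(-1)^d`), and Sullivan's
relation `λμ = (1⊗μ)(λ⊗1) + (μ⊗1)(1⊗λ)` holds. -/
theorem sphere_loop_bialgebra {R : Type} [CommRing R] {A : Type} [AddCommGroup A]
    [Module R A] (n : ℤ) (hodd : Odd n) (hn : 3 ≤ n)
    (b : Module.Basis (Bool × ℕ) R A)
    (mu : A ⊗[R] A →ₗ[R] A) (lam : A →ₗ[R] A ⊗[R] A) (par : A →ₗ[R] A)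
    -- the product of basis monomials: `A'^s U^k · A'^t U^l`
    (hmu : ∀ p q : Bool × ℕ, mu (b p ⊗ₜ[R] b q) =
      if p.1 && q.1 then 0 else b (p.1 || q.1, p.2 + q.2))
    -- the coproduct on basis monomials
    (hlamA : ∀ k : ℕ, lam (b (true, k)) =
      ∑ i ∈ Finset.range k, b (true, i) ⊗ₜ[R] b (true, k - 1 - i))
    (hlamU : ∀ k : ℕ, lam (b (false, k)) =
      ∑ i ∈ Finset.range k,
        (b (true, i) ⊗ₜ[R] b (false, k - 1 - i) - b (false, i) ⊗ₜ[R] b (true, k - 1 - i)))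
    -- the parity operator `x ↦ (-1)^{|x|} x`; since `n` is odd, `deg n p` is odd iff `p.1`
    (hpar : ∀ p : Bool × ℕ, par (b p) = if p.1 then -b p else b p) :
    -- λη = 0
    (lam (b (false, 0)) = 0) ∧
    -- λ is homogeneous of degree 1 - 2n
    (∀ p : Bool × ℕ, lam (b p) ∈ Submodule.span R
      {t : A ⊗[R] A | ∃ q r : Bool × ℕ,
        deg n q + deg n r = deg n p + (1 - 2 * n) ∧ t = b q ⊗ₜ[R] b r}) ∧
    -- skew-coassociativity: (λ⊗1)λ = -(1⊗λ)λ
    ((LinearMap.rTensor A lam).comp lam =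
      -((TensorProduct.assoc R A A A).symm.toLinearMap.comp
        ((TensorProduct.map par lam).comp lam))) ∧
    -- Sullivan's relation: λμ = (1⊗μ)(λ⊗1) + (μ⊗1)(1⊗λ)
    (lam.comp mu =
      (TensorProduct.map LinearMap.id mu).comp
        ((TensorProduct.assoc R A A A).toLinearMap.comp (LinearMap.rTensor A lam))
      + (LinearMap.rTensor A mu).comp
        ((TensorProduct.assoc R A A A).symm.toLinearMap.comp
          (TensorProduct.map par lam))) := by
  refine ⟨?_, ?_, ?_, ?_⟩
  · rw [hlamU 0]; simp
  · rintro ⟨s, k⟩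
    cases s
    · rw [hlamU k]
      refine Submodule.sum_mem _ fun i hi => ?_
      have hik := Finset.mem_range.mp hi
      refine sub_mem (Submodule.subset_span ⟨(true, i), (false, k - 1 - i), ?_, rfl⟩)
        (Submodule.subset_span ⟨(false, i), (true, k - 1 - i), ?_, rfl⟩) <;>
      · simp only [deg, reduceIte, if_true]
        have h : ((k - 1 - i : ℕ) : ℤ) = (k : ℤ) - 1 - i := by omega
        rw [h]; ring
    · rw [hlamA k]
      refine Submodule.sum_mem _ fun i hi => ?_
      have hik := Finset.mem_range.mp hi
      refine Submodule.subset_span ⟨(true, i), (true, k - 1 - i), ?_, rfl⟩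
      simp only [deg, reduceIte, if_true]
      have h : ((k - 1 - i : ℕ) : ℤ) = (k : ℤ) - 1 - i := by omega
      rw [h]; ring
  · refine b.ext fun p => ?_
    obtain ⟨s, k⟩ := p
    cases s
    · simp only [LinearMap.comp_apply, LinearMap.neg_apply, LinearEquiv.coe_coe, hlamA, hlamU,
        map_sum, map_sub, map_neg, rTensor_tmul, TensorProduct.map_tmul, hpar, reduceIte, if_true,
        Bool.false_eq_true, if_false, TensorProduct.sum_tmul, TensorProduct.tmul_sum,
        TensorProduct.tmul_sub, TensorProduct.sub_tmul, TensorProduct.neg_tmul,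
        TensorProduct.tmul_neg, TensorProduct.assoc_symm_tmul, Finset.sum_neg_distrib, neg_neg]
      refine Eq.trans ?_ ((key k (fun a c =>
          (b (true, a) ⊗ₜ[R] b (true, c)) ⊗ₜ[R] b (false, k - 2 - a - c)
          - (b (true, a) ⊗ₜ[R] b (false, c)) ⊗ₜ[R] b (true, k - 2 - a - c)
          + (b (false, a) ⊗ₜ[R] b (true, c)) ⊗ₜ[R] b (true, k - 2 - a - c))).trans ?_)
      · refine Finset.sum_congr rfl fun i hi => ?_
        rw [← Finset.sum_sub_distrib]
        refine Finset.sum_congr rfl fun j hj => ?_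
        have e : k - 2 - j - (i - 1 - j) = k - 1 - i := by
          have := Finset.mem_range.mp hi; have := Finset.mem_range.mp hj; omega
        simp only [e]
        abel
      · rw [← Finset.sum_neg_distrib]
        refine Finset.sum_congr rfl fun i hi => ?_
        rw [neg_sub, ← Finset.sum_sub_distrib]
        refine Finset.sum_congr rfl fun j hj => ?_
        have e : k - 2 - i - j = k - 1 - i - 1 - j := by omega
        simp only [e]
        abel
    · simp only [LinearMap.comp_apply, LinearMap.neg_apply, LinearEquiv.coe_coe, hlamA, hlamU,
        map_sum, map_sub, map_neg, rTensor_tmul, TensorProduct.map_tmul, hpar, reduceIte, if_true,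
        Bool.false_eq_true, if_false, TensorProduct.sum_tmul, TensorProduct.tmul_sum,
        TensorProduct.tmul_sub, TensorProduct.sub_tmul, TensorProduct.neg_tmul,
        TensorProduct.tmul_neg, TensorProduct.assoc_symm_tmul, Finset.sum_neg_distrib, neg_neg]
      refine Eq.trans ?_ ((key k (fun a c =>
          (b (true, a) ⊗ₜ[R] b (true, c)) ⊗ₜ[R] b (true, k - 2 - a - c))).trans ?_)
      · refine Finset.sum_congr rfl fun i hi => Finset.sum_congr rfl fun j hj => ?_
        have e : k - 2 - j - (i - 1 - j) = k - 1 - i := by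
          have := Finset.mem_range.mp hi; have := Finset.mem_range.mp hj; omega
        simp only [e]
      · refine Finset.sum_congr rfl fun i hi => Finset.sum_congr rfl fun j hj => ?_
        have e : k - 2 - i - j = k - 1 - i - 1 - j := by omega
        simp only [e]
  · refine Module.Basis.ext (b.tensorProduct b) fun p => ?_
    obtain ⟨⟨s, k⟩, ⟨t, l⟩⟩ := p
    rw [Module.Basis.tensorProduct_apply]
    cases s <;> cases t <;>
      simp only [LinearMap.comp_apply, LinearMap.add_apply, LinearEquiv.coe_coe, hmu,
        Bool.and_self, Bool.and_true, Bool.and_false, Bool.true_and, Bool.false_and,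
        Bool.or_self, Bool.or_true, Bool.true_or, Bool.false_or,
        Bool.false_eq_true, if_false, if_true, reduceIte,
        hlamA, hlamU, map_sum, map_sub, map_neg, map_zero, rTensor_tmul,
        TensorProduct.map_tmul, hpar, TensorProduct.sum_tmul, TensorProduct.tmul_sum,
        TensorProduct.tmul_sub, TensorProduct.sub_tmul, TensorProduct.neg_tmul,
        TensorProduct.tmul_neg, TensorProduct.assoc_symm_tmul, TensorProduct.assoc_tmul,
        LinearMap.id_coe, id_eq, Finset.sum_neg_distrib, neg_neg,
        TensorProduct.tmul_zero, TensorProduct.zero_tmul, Finset.sum_const_zero,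
        add_zero, zero_add, neg_zero, sub_zero, zero_sub]
    all_goals
      rw [Finset.sum_range_add]
      congr 1
      · refine Finset.sum_congr rfl fun i hi => ?_
        have e : k + l - 1 - i = k - 1 - i + l := by
          have := Finset.mem_range.mp hi; omega
        rw [e]
      · refine Finset.sum_congr rfl fun j hj => ?_
        have e : k + l - 1 - (k + j) = l - 1 - j := by omega
        rw [e]


end SphereLoop
end
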